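/- A fibration p : E → B has the weakly unique path homotopically lifting property (wuphl) if and only if every loop in each fiber of p is nullhomotopic in E, i.e., every loop γ : [0,1] → E with p ∘ γ constant is homotopic relative to {0,1} to the constant loop at γ(0). -/

import Mathlib

universe u

open scoped unitInterval

/-- `p` has the weakly unique path homotopically lifting property (wuphl). -/
def Wuphl {E B : Type*} [TopologicalSpace E] [TopologicalSpace B] (p : C(E, B)) : Prop :=
  ∀ α β : C(unitInterval, E), α 0 = β 0 → α 1 = β 1 →
    (p.comp α).HomotopicRel (p.comp β) {0, 1} →
    α.HomotopicRel β {0, 1}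

/-- `p` is a (Hurewicz) fibration: it has the homotopy lifting property with respect to
every topological space. -/
def IsFibration {E B : Type*} [TopologicalSpace E] [TopologicalSpace B] (p : C(E, B)) : Prop :=
  ∀ (X : Type u) [TopologicalSpace X] (f : C(X, E)) (F : C(X × unitInterval, B)),
    (∀ x, F (x, 0) = p (f x)) →
    ∃ F' : C(X × unitInterval, E), (∀ z, p (F' z) = F z) ∧ (∀ x, F' (x, 0) = f x)

section Aux

open CategoryTheory FundamentalGroupoid

attribute [local instance] Path.Homotopic.setoid

private lemma contractible_II : ContractibleSpace (I × I) := by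
  have hconv : Convex ℝ ((Set.Icc (0:ℝ) 1) ×ˢ (Set.Icc (0:ℝ) 1)) :=
    (convex_Icc (0:ℝ) 1).prod (convex_Icc (0:ℝ) 1)
  have h1 : ContractibleSpace ((Set.Icc (0:ℝ) 1) ×ˢ (Set.Icc (0:ℝ) 1) : Set (ℝ × ℝ)) :=
    hconv.contractibleSpace ⟨(0, 0), by
      constructor <;> exact ⟨le_refl 0, zero_le_one⟩⟩
  exact (Homeomorph.Set.prod (Set.Icc (0:ℝ) 1) (Set.Icc (0:ℝ) 1)).contractibleSpace_iff.mp h1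

private lemma homotopic_transfer {X : Type*} [TopologicalSpace X] {x y x' y' : X}
    {P Q : Path x y} {P' Q' : Path x' y'} (hP : ∀ t, P t = P' t) (hQ : ∀ t, Q t = Q' t)
    (h : P'.Homotopic Q') : P.Homotopic Q := by
  obtain ⟨H⟩ := h
  exact ⟨ContinuousMap.HomotopyRel.cast H
    (ContinuousMap.ext fun t => (hP t).symm) (ContinuousMap.ext fun t => (hQ t).symm)⟩

private lemma square_homotopic {X : Type*} [TopologicalSpace X] (G : C(I × I, X))
    {x00 x10 x01 x11 : X} (b : Path x00 x10) (l : Path x00 x01) (r : Path x10 x11)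
    (tp : Path x01 x11) (hb : ∀ s, b s = G (s, 0)) (hl : ∀ s, l s = G (0, s))
    (hr : ∀ s, r s = G (1, s)) (ht : ∀ s, tp s = G (s, 1)) :
    (b.trans r).Homotopic (l.trans tp) := by
  letI : ContractibleSpace (I × I) := contractible_II
  let sb : Path ((0, 0) : I × I) (1, 0) :=
    ⟨⟨fun s => (s, 0), (continuous_id.prodMk continuous_const)⟩, rfl, rfl⟩
  let sr : Path ((1, 0) : I × I) (1, 1) :=
    ⟨⟨fun s => (1, s), (continuous_const.prodMk continuous_id)⟩, rfl, rfl⟩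
  let sl : Path ((0, 0) : I × I) (0, 1) :=
    ⟨⟨fun s => (0, s), (continuous_const.prodMk continuous_id)⟩, rfl, rfl⟩
  let st : Path ((0, 1) : I × I) (1, 1) :=
    ⟨⟨fun s => (s, 1), (continuous_id.prodMk continuous_const)⟩, rfl, rfl⟩
  haveI : SimplyConnectedSpace (I × I) := SimplyConnectedSpace.ofContractible (I × I)
  have hsq : (sb.trans sr).Homotopic (sl.trans st) :=
    SimplyConnectedSpace.paths_homotopic (sb.trans sr) (sl.trans st)
  have hm := hsq.map G
  refine homotopic_transfer ?_ ?_ hm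
  · intro t
    rw [Path.trans_apply, Path.map_coe, Function.comp_apply, Path.trans_apply]
    split_ifs
    · exact hb _
    · exact hr _
  · intro t
    rw [Path.trans_apply, Path.map_coe, Function.comp_apply, Path.trans_apply]
    split_ifs
    · exact hl _
    · exact ht _

end Aux

section Main

open CategoryTheory FundamentalGroupoid

attribute [local instance] Path.Homotopic.setoid

theorem fibration_wuphl_iff_loops_in_fibers_nullhomotopic {E B : Type*} [TopologicalSpace E]
    [TopologicalSpace B] (p : C(E, B)) (hp : IsFibration p) :
    Wuphl p ↔
    (∀ γ : C(unitInterval, E), γ 0 = γ 1 → (∀ t, p (γ t) = p (γ 0)) →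
      γ.HomotopicRel (ContinuousMap.const unitInterval (γ 0)) {0, 1}) := by
  constructor
  · intro h γ hloop hfib
    refine h γ (ContinuousMap.const unitInterval (γ 0)) rfl hloop.symm ?_
    have heq : p.comp γ = p.comp (ContinuousMap.const unitInterval (γ 0)) :=
      ContinuousMap.ext fun t => hfib t
    rw [heq]
    exact ContinuousMap.HomotopicRel.refl _
  · intro hnull α β h0 h1 hαβ
    set x0 := α 0 with hx0
    set x1 := α 1 with hx1
    let a : Path x0 x1 := ⟨α, rfl, rfl⟩
    let b : Path x0 x1 := ⟨β, h0.symm, h1.symm⟩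
    let ℓ : Path x0 x0 := a.trans b.symm
    -- `p ∘ ℓ` is nullhomotopic rel endpoints
    have hpab : (a.map p.continuous).Homotopic (b.map p.continuous) := by
      obtain ⟨H⟩ := hαβ
      exact ⟨ContinuousMap.HomotopyRel.cast H
        (ContinuousMap.ext fun t => rfl) (ContinuousMap.ext fun t => rfl)⟩
    have hmapl : (⟦ℓ.map p.continuous⟧ : Path.Homotopic.Quotient (p x0) (p x0)) =
        ⟦Path.refl (p x0)⟧ := by
      let PA : (⟨p x0⟩ : FundamentalGroupoid B) ⟶ ⟨p x1⟩ := ⟦a.map p.continuous⟧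
      let PB : (⟨p x0⟩ : FundamentalGroupoid B) ⟶ ⟨p x1⟩ := ⟦b.map p.continuous⟧
      have hPAB : PA = PB := Quotient.sound hpab
      have hsplit : ℓ.map p.continuous =
          (a.map p.continuous).trans ((b.map p.continuous).symm) := by
        show (a.trans b.symm).map p.continuous = _
        rw [Path.map_trans, Path.map_symm]
      have hPP : PA ≫ Groupoid.inv PB = 𝟙 (⟨p x0⟩ : FundamentalGroupoid B) := by
        rw [hPAB]; exact Groupoid.comp_inv PB
      rw [hsplit]
      exact hPP
    have hK : (ℓ.map p.continuous).Homotopic (Path.refl (p x0)) := Quotient.exact hmapl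
    obtain ⟨K⟩ := hK
    -- lift the nullhomotopy
    let F : C(ULift unitInterval × unitInterval, B) :=
      (K.toHomotopy.toContinuousMap).comp
        ⟨fun z => (z.2, z.1.down),
          (continuous_snd.prodMk (continuous_uliftDown.comp continuous_fst))⟩
    obtain ⟨G, hGp, hG0⟩ := hp (ULift unitInterval)
      ⟨fun x => ℓ x.down, ℓ.continuous.comp continuous_uliftDown⟩ F
      (fun x => (K.apply_zero x.down : _))
    let G' : C(unitInterval × unitInterval, E) :=
      G.comp ⟨fun z => (ULift.up z.1, z.2),
        ((continuous_uliftUp.comp continuous_fst).prodMk continuous_snd)⟩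
    have hbot : ∀ t, G' (t, 0) = ℓ t := fun t => hG0 (ULift.up t)
    have hpG : ∀ t s, p (G' (t, s)) = K (s, t) := fun t s => hGp (ULift.up t, s)
    have h00 : G' (0, 0) = x0 := (hbot 0).trans ℓ.source
    have h10 : G' (1, 0) = x0 := (hbot 1).trans ℓ.target
    let u : Path x0 (G' (0, 1)) :=
      ⟨⟨fun s => G' (0, s), G'.continuous.comp (continuous_const.prodMk continuous_id)⟩, h00, rfl⟩
    let v : Path x0 (G' (1, 1)) :=
      ⟨⟨fun s => G' (1, s), G'.continuous.comp (continuous_const.prodMk continuous_id)⟩, h10, rfl⟩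
    let w : Path (G' (0, 1)) (G' (1, 1)) :=
      ⟨⟨fun t => G' (t, 1), G'.continuous.comp (continuous_id.prodMk continuous_const)⟩, rfl, rfl⟩
    have mem0 : (0 : I) ∈ ({0, 1} : Set I) := Set.mem_insert _ _
    have mem1 : (1 : I) ∈ ({0, 1} : Set I) := Set.mem_insert_of_mem _ rfl
    have hpu : ∀ s, p (u s) = p x0 := fun s =>
      (hpG 0 s).trans ((K.eq_fst s mem0).trans (congrArg p ℓ.source))
    have hpv : ∀ s, p (v s) = p x0 := fun s =>
      (hpG 1 s).trans ((K.eq_fst s mem1).trans (congrArg p ℓ.target))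
    have hpw : ∀ t, p (w t) = p x0 := fun t =>
      (hpG t 1).trans (K.apply_one t)
    let c : Path x0 x0 := u.trans (w.trans v.symm)
    have hpc : ∀ t, p (c t) = p x0 := by
      intro t
      show p ((u.trans (w.trans v.symm)) t) = p x0
      rw [Path.trans_apply]
      split_ifs
      · exact hpu _
      · rw [Path.trans_apply]
        split_ifs
        · exact hpw _
        · exact hpv _
    have hcnull : c.Homotopic (Path.refl x0) := by
      have h1' : c.toContinuousMap 0 = c.toContinuousMap 1 :=
        c.source.trans c.target.symm
      have h2' : ∀ t, p (c.toContinuousMap t) = p (c.toContinuousMap 0) := fun t =>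
        (hpc t).trans (hpc 0).symm
      obtain ⟨H⟩ := hnull c.toContinuousMap h1' h2'
      exact ⟨ContinuousMap.HomotopyRel.cast H rfl
        (ContinuousMap.ext fun t => c.source)⟩
    have hsq : (ℓ.trans v).Homotopic (u.trans w) :=
      square_homotopic G' ℓ u v w (fun s => (hbot s).symm) (fun s => rfl) (fun s => rfl)
        (fun s => rfl)
    -- groupoid algebra
    let A : (⟨x0⟩ : FundamentalGroupoid E) ⟶ ⟨x0⟩ := ⟦ℓ⟧
    let U : (⟨x0⟩ : FundamentalGroupoid E) ⟶ ⟨G' (0, 1)⟩ := ⟦u⟧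
    let W : (⟨G' (0, 1)⟩ : FundamentalGroupoid E) ⟶ ⟨G' (1, 1)⟩ := ⟦w⟧
    let V : (⟨x0⟩ : FundamentalGroupoid E) ⟶ ⟨G' (1, 1)⟩ := ⟦v⟧
    have e1 : A ≫ V = U ≫ W := by
      show Path.Homotopic.Quotient.trans ⟦ℓ⟧ ⟦v⟧ = Path.Homotopic.Quotient.trans ⟦u⟧ ⟦w⟧
      change (⟦ℓ.trans v⟧ : Path.Homotopic.Quotient x0 (G' (1, 1))) = ⟦u.trans w⟧
      exact Quotient.sound hsq
    have e2 : U ≫ W ≫ Groupoid.inv V = 𝟙 (⟨x0⟩ : FundamentalGroupoid E) := by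
      show Path.Homotopic.Quotient.trans ⟦u⟧ (Path.Homotopic.Quotient.trans ⟦w⟧ ⟦v.symm⟧) =
        (⟦Path.refl x0⟧ : Path.Homotopic.Quotient x0 x0)
      change (⟦u.trans (w.trans v.symm)⟧ : Path.Homotopic.Quotient x0 x0) = ⟦Path.refl x0⟧
      exact Quotient.sound hcnull
    have e3 : A = 𝟙 (⟨x0⟩ : FundamentalGroupoid E) := by
      calc A = A ≫ V ≫ Groupoid.inv V := by rw [Groupoid.comp_inv, Category.comp_id]
        _ = (A ≫ V) ≫ Groupoid.inv V := by rw [Category.assoc]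
        _ = (U ≫ W) ≫ Groupoid.inv V := by rw [e1]
        _ = U ≫ W ≫ Groupoid.inv V := by rw [Category.assoc]
        _ = 𝟙 (⟨x0⟩ : FundamentalGroupoid E) := e2
    let Aq : (⟨x0⟩ : FundamentalGroupoid E) ⟶ ⟨x1⟩ := ⟦a⟧
    let Bq : (⟨x0⟩ : FundamentalGroupoid E) ⟶ ⟨x1⟩ := ⟦b⟧
    have hA : A = Aq ≫ Groupoid.inv Bq := by
      show (⟦a.trans b.symm⟧ : Path.Homotopic.Quotient x0 x0) =
        Path.Homotopic.Quotient.trans ⟦a⟧ ⟦b.symm⟧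
      exact Path.Homotopic.Quotient.mk_trans _ _
    have e4 : Aq = Bq := by
      calc Aq = Aq ≫ 𝟙 (⟨x1⟩ : FundamentalGroupoid E) := by rw [Category.comp_id]
        _ = Aq ≫ Groupoid.inv Bq ≫ Bq := by rw [Groupoid.inv_comp]
        _ = (Aq ≫ Groupoid.inv Bq) ≫ Bq := by rw [Category.assoc]
        _ = A ≫ Bq := by rw [hA]
        _ = 𝟙 (⟨x0⟩ : FundamentalGroupoid E) ≫ Bq := by rw [e3]
        _ = Bq := by rw [Category.id_comp]
    have e5 : a.Homotopic b := Quotient.exact e4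
    obtain ⟨Hf⟩ := e5
    exact ⟨Hf⟩

end Main
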